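/- Let R and S be linear collapse-free TRSs over disjoint ranked alphabets Σ and Δ respectively, let Γ be a ranked alphabet with Σ ∪ Δ ⊆ Γ, and consider R and S as TRSs over Γ. Then →*_{R∪S} = →*_R ∘ →*_S, i.e., u →*_{R∪S} w if and only if there exists v with u →*_R v and v →*_S w. -/

import Mathlib

set_option autoImplicit false

/-!
Basic framework: ranked alphabets, terms, term rewrite systems,
bottom-up tree automata, recognizability.
A ranked alphabet is modelled by a (finite) type `σ` together with an
arity function `ar : σ → ℕ`.  `Tm.var n` denotes the variable `x_{n+1}`,
so `T_Σ(X_m)` corresponds to terms all of whose variables satisfy `n < m`,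
and ground terms (`T_Σ`) are terms satisfying `Tm.Ground`.
-/

/-- Terms over the ranked alphabet `(σ, ar)` with variables `x₁, x₂, …`
(`var n` is `x_{n+1}`). -/
inductive Tm (σ : Type) (ar : σ → ℕ) : Type
  | var : ℕ → Tm σ ar
  | app : (f : σ) → (Fin (ar f) → Tm σ ar) → Tm σ ar

namespace Tm

variable {σ γ : Type} {ar : σ → ℕ} {arγ : γ → ℕ}

/-- Application of a substitution `θ` (assigning a term to each variable). -/
def subst (θ : ℕ → Tm σ ar) : Tm σ ar → Tm σ ar
  | var n => θ n
  | app f ts => app f fun i => (ts i).subst θ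

/-- A term is ground if it contains no variables. -/
def Ground : Tm σ ar → Prop
  | var _ => False
  | app _ ts => ∀ i, (ts i).Ground

/-- The set of (indices of) variables occurring in a term. -/
def vars : Tm σ ar → Set ℕ
  | var n => {n}
  | app _ ts => ⋃ i, (ts i).vars

/-- Number of occurrences of the variable `x_{n+1}` in a term. -/
def count (n : ℕ) : Tm σ ar → ℕ
  | var m => if m = n then 1 else 0
  | app _ ts => ∑ i, (ts i).count n

/-- A term is linear if every variable occurs at most once in it. -/
def Linear (t : Tm σ ar) : Prop := ∀ n, t.count n ≤ 1

/-- The symbol `s` occurs in the term. -/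
def symOccurs (s : σ) : Tm σ ar → Prop
  | var _ => False
  | app f ts => f = s ∨ ∃ i, (ts i).symOccurs s

/-- Height of a term (constants and variables have height 0). -/
def height : Tm σ ar → ℕ
  | var _ => 0
  | app _ ts => Finset.univ.sup fun i => (ts i).height + 1

/-- Renaming of the alphabet along an arity-preserving map. -/
def map (ι : σ → γ) (h : ∀ s, arγ (ι s) = ar s) : Tm σ ar → Tm γ arγ
  | var n => var n
  | app f ts => app (ι f) fun i => (ts (Fin.cast (h f) i)).map ι h

/-- The subterm of `t` at a position (a list of argument indices), if defined. -/
def subAt : Tm σ ar → List ℕ → Option (Tm σ ar)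
  | t, [] => some t
  | var _, _ :: _ => none
  | app f ts, i :: p => if h : i < ar f then (ts ⟨i, h⟩).subAt p else none

/-- Subterm relation. -/
inductive Subtm : Tm σ ar → Tm σ ar → Prop
  | refl (t : Tm σ ar) : Subtm t t
  | app {s : Tm σ ar} {f : σ} {ts : Fin (ar f) → Tm σ ar} (i : Fin (ar f)) :
      Subtm s (ts i) → Subtm s (Tm.app f ts)

end Tm

section Rewriting

variable {σ γ : Type} {ar : σ → ℕ} {arγ : γ → ℕ}

/-- One-step rewriting by the rule set `R`: apply a rule under a substitution
at the root, or rewrite inside one argument. -/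
inductive Step (R : Set (Tm σ ar × Tm σ ar)) : Tm σ ar → Tm σ ar → Prop
  | rule {l r : Tm σ ar} (θ : ℕ → Tm σ ar) (h : (l, r) ∈ R) :
      Step R (l.subst θ) (r.subst θ)
  | congr {f : σ} {ts : Fin (ar f) → Tm σ ar} {t' : Tm σ ar} (i : Fin (ar f)) :
      Step R (ts i) t' → Step R (Tm.app f ts) (Tm.app f (Function.update ts i t'))

/-- Many-step rewriting: reflexive-transitive closure of `Step`. -/
def Steps (R : Set (Tm σ ar × Tm σ ar)) : Tm σ ar → Tm σ ar → Prop :=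
  Relation.ReflTransGen (Step R)

/-- `R` is a term rewrite system: finitely many rules, and every variable of a
right-hand side occurs in the corresponding left-hand side. -/
def IsTRS (R : Set (Tm σ ar × Tm σ ar)) : Prop :=
  R.Finite ∧ ∀ lr ∈ R, lr.2.vars ⊆ lr.1.vars

/-- The set `R*(L)` of descendants of members of `L`. -/
def Desc (R : Set (Tm σ ar × Tm σ ar)) (L : Set (Tm σ ar)) : Set (Tm σ ar) :=
  {p | ∃ q ∈ L, Steps R q p}

/-- `R` is terminating: there is no infinite reduction sequence. -/
def Terminating (R : Set (Tm σ ar × Tm σ ar)) : Prop :=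
  ¬ ∃ f : ℕ → Tm σ ar, ∀ n, Step R (f n) (f (n + 1))

/-- `R` is confluent. -/
def Confluent (R : Set (Tm σ ar × Tm σ ar)) : Prop :=
  ∀ a b c, Steps R a b → Steps R a c → ∃ d, Steps R b d ∧ Steps R c d

/-- `u` is an `R`-normal form of `t`. -/
def NormalFormOf (R : Set (Tm σ ar × Tm σ ar)) (t u : Tm σ ar) : Prop :=
  Steps R t u ∧ ¬ ∃ v, Step R u v

/-- The term is a variable. -/
def IsVarTm (t : Tm σ ar) : Prop := ∃ n, t = Tm.var n

/-- Every left-hand side is linear. -/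
def LeftLinearTRS (R : Set (Tm σ ar × Tm σ ar)) : Prop :=
  ∀ lr ∈ R, lr.1.Linear

/-- All left- and right-hand sides are linear. -/
def LinearTRS (R : Set (Tm σ ar × Tm σ ar)) : Prop :=
  ∀ lr ∈ R, lr.1.Linear ∧ lr.2.Linear

/-- No rule has a variable as left-hand side or as right-hand side. -/
def CollapseFree (R : Set (Tm σ ar × Tm σ ar)) : Prop :=
  ∀ lr ∈ R, ¬ IsVarTm lr.1 ∧ ¬ IsVarTm lr.2

/-- Transport of a rule set along an arity-preserving renaming of the alphabet. -/
def mapRules (ι : σ → γ) (h : ∀ s, arγ (ι s) = ar s) (R : Set (Tm σ ar × Tm σ ar)) :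
    Set (Tm γ arγ × Tm γ arγ) :=
  (fun lr => (lr.1.map ι h, lr.2.map ι h)) '' R

end Rewriting

/-- A bottom-up tree automaton over `(σ, ar)` with state type `Q`:
transition rules `δ(q₁,…,qₙ) → q`, λ-rules `q → q'`, and final states. -/
structure BTA (σ : Type) (ar : σ → ℕ) (Q : Type) where
  trans : ∀ f : σ, (Fin (ar f) → Q) → Q → Prop
  eps : Q → Q → Prop
  final : Q → Prop

namespace BTA

variable {σ : Type} {ar : σ → ℕ} {Q : Type}

/-- `t →* q`: the (ground) term `t` can be rewritten to the state `q`. -/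
inductive Reach (A : BTA σ ar Q) : Tm σ ar → Q → Prop
  | app {f : σ} {ts : Fin (ar f) → Tm σ ar} {qs : Fin (ar f) → Q} {q : Q} :
      (∀ i, Reach A (ts i) (qs i)) → A.trans f qs q → Reach A (Tm.app f ts) q
  | eps {t : Tm σ ar} {q q' : Q} : Reach A t q → A.eps q q' → Reach A t q'

/-- The tree language recognized by the automaton. -/
def Lang (A : BTA σ ar Q) : Set (Tm σ ar) := {t | ∃ q, A.final q ∧ A.Reach t q}

end BTA

/-- A tree language is recognizable if some bottom-up tree automaton with a
finite state set recognizes it. -/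
def Recognizable {σ : Type} {ar : σ → ℕ} (L : Set (Tm σ ar)) : Prop :=
  ∃ (Q : Type) (_ : Finite Q) (A : BTA σ ar Q), A.Lang = L

/-- `R` (a TRS over all of `σ`, thought of as `sign(R)`) preserves
recognizability of finite tree languages: for every ranked alphabet extending
`σ` (i.e. every finite type with an arity-preserving injection from `σ`) and
every finite tree language of ground terms, the descendant set is recognizable. -/
def PRF {σ : Type} {ar : σ → ℕ} (R : Set (Tm σ ar × Tm σ ar)) : Prop :=
  ∀ (γ : Type) (arγ : γ → ℕ), Finite γ →
    ∀ ι : σ → γ, Function.Injective ι →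
      ∀ h : ∀ s, arγ (ι s) = ar s,
        ∀ L : Set (Tm γ arγ), L.Finite → (∀ t ∈ L, t.Ground) →
          Recognizable (Desc (mapRules ι h R) L)

/-- `R` preserves recognizability: as `PRF`, but for arbitrary recognizable
tree languages. -/
def PR {σ : Type} {ar : σ → ℕ} (R : Set (Tm σ ar × Tm σ ar)) : Prop :=
  ∀ (γ : Type) (arγ : γ → ℕ), Finite γ →
    ∀ ι : σ → γ, Function.Injective ι →
      ∀ h : ∀ s, arγ (ι s) = ar s,
        ∀ L : Set (Tm γ arγ), Recognizable L →
          Recognizable (Desc (mapRules ι h R) L)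

/-! ### Auxiliary lemmas -/

section Aux

variable {γ : Type} {arγ : γ → ℕ}

/-- All symbols of the term lie in `A`. -/
def SymsIn (A : Set γ) : Tm γ arγ → Prop
  | .var _ => True
  | .app f ts => f ∈ A ∧ ∀ i, SymsIn A (ts i)

lemma count_eq_zero_iff {t : Tm γ arγ} {x : ℕ} : t.count x = 0 ↔ x ∉ t.vars := by
  induction t with
  | var n =>
    simp only [Tm.count, Tm.vars, Set.mem_singleton_iff]
    rcases eq_or_ne n x with h | h
    · simp [h]
    · simp [h, Ne.symm h]
  | app f ts ih =>
    simp only [Tm.count, Tm.vars, Set.mem_iUnion, Finset.sum_eq_zero_iff,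
      Finset.mem_univ, forall_true_left]
    push_neg
    exact forall_congr' fun i => ih i

lemma one_le_count_of_mem {t : Tm γ arγ} {x : ℕ} (h : x ∈ t.vars) : 1 ≤ t.count x := by
  rcases Nat.eq_zero_or_pos (t.count x) with h0 | h1
  · exact absurd (count_eq_zero_iff.mp h0) (not_not_intro h)
  · exact h1

lemma subst_congr {t : Tm γ arγ} {θ θ' : ℕ → Tm γ arγ}
    (h : ∀ x ∈ t.vars, θ x = θ' x) : t.subst θ = t.subst θ' := by
  induction t with
  | var n => exact h n rfl
  | app f ts ih =>
    simp only [Tm.subst]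
    congr 1
    funext i
    exact ih i fun x hx => h x (Set.mem_iUnion.mpr ⟨i, hx⟩)

lemma linear_arg {f : γ} {ts : Fin (arγ f) → Tm γ arγ}
    (h : (Tm.app f ts).Linear) (i : Fin (arγ f)) : (ts i).Linear := by
  intro n
  refine le_trans ?_ (h n)
  exact Finset.single_le_sum (f := fun j => (ts j).count n) (fun _ _ => Nat.zero_le _)
    (Finset.mem_univ i)

lemma linear_sep {f : γ} {ts : Fin (arγ f) → Tm γ arγ}
    (h : (Tm.app f ts).Linear) {x : ℕ} {i : Fin (arγ f)} (hx : x ∈ (ts i).vars)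
    {j : Fin (arγ f)} (hj : j ≠ i) : x ∉ (ts j).vars := by
  intro hxj
  have hsum := h x
  simp only [Tm.count] at hsum
  have h2 : (ts i).count x + (ts j).count x ≤ ∑ k, (ts k).count x := by
    have hle := Finset.sum_le_sum_of_subset (f := fun k => (ts k).count x)
      (Finset.subset_univ ({i, j} : Finset (Fin (arγ f))))
    rwa [Finset.sum_pair hj.symm] at hle
  have := le_trans h2 hsum
  have hi1 := one_le_count_of_mem hx
  have hj1 := one_le_count_of_mem hxj
  omega

lemma count_one_exists {f : γ} {ts : Fin (arγ f) → Tm γ arγ} {x : ℕ}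
    (h : (Tm.app f ts).count x = 1) :
    ∃ i, (ts i).count x = 1 ∧ ∀ j, j ≠ i → (ts j).count x = 0 := by
  simp only [Tm.count] at h
  have hne : ∃ i, (ts i).count x ≠ 0 := by
    by_contra hc
    push_neg at hc
    rw [Finset.sum_eq_zero (fun i _ => hc i)] at h
    omega
  obtain ⟨i, hi⟩ := hne
  refine ⟨i, ?_, ?_⟩
  · have h1 : (ts i).count x ≤ ∑ k, (ts k).count x :=
      Finset.single_le_sum (f := fun k => (ts k).count x)
        (fun _ _ => Nat.zero_le _) (Finset.mem_univ i)
    omega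
  · intro j hj
    by_contra hc
    have h2 : (ts i).count x + (ts j).count x ≤ ∑ k, (ts k).count x := by
      have hle := Finset.sum_le_sum_of_subset (f := fun k => (ts k).count x)
        (Finset.subset_univ ({i, j} : Finset (Fin (arγ f))))
      rwa [Finset.sum_pair hj.symm] at hle
    omega

lemma step_subst_single {X : Set (Tm γ arγ × Tm γ arγ)} {t : Tm γ arγ} {x : ℕ}
    (h1 : t.count x = 1) {θ : ℕ → Tm γ arγ} {a : Tm γ arγ} (ha : Step X (θ x) a) :
    Step X (t.subst θ) (t.subst (Function.update θ x a)) := by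
  induction t with
  | var n =>
    simp only [Tm.count] at h1
    have hnx : n = x := by by_contra hc; simp [hc] at h1
    subst hnx
    simpa [Tm.subst] using ha
  | app f ts ih =>
    obtain ⟨i, hi, hother⟩ := count_one_exists h1
    have hstep := ih i hi
    have h2 := Step.congr (R := X) (f := f) (ts := fun j => (ts j).subst θ) i hstep
    have key : (fun j => (ts j).subst (Function.update θ x a)) =
        Function.update (fun j => (ts j).subst θ) i ((ts i).subst (Function.update θ x a)) := by
      funext j
      by_cases hji : j = i
      · subst hji; simp
      · rw [Function.update_of_ne hji]
        exact subst_congr fun y hy => by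
          have hyx : y ≠ x := fun h => by
            subst h
            exact absurd (count_eq_zero_iff.mp (hother j hji)) (not_not_intro hy)
          rw [Function.update_of_ne hyx]
    simp only [Tm.subst]
    rw [key]
    exact h2

lemma steps_subst_le1 {X : Set (Tm γ arγ × Tm γ arγ)} {t : Tm γ arγ} {x : ℕ}
    (h1 : t.count x ≤ 1) {θ : ℕ → Tm γ arγ} {b c : Tm γ arγ} (h : Step X b c) :
    Steps X (t.subst (Function.update θ x b)) (t.subst (Function.update θ x c)) := by
  rcases Nat.lt_or_ge (t.count x) 1 with h0 | hge
  · have h0 : t.count x = 0 := by omega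
    have hnot := count_eq_zero_iff.mp h0
    have : t.subst (Function.update θ x b) = t.subst (Function.update θ x c) :=
      subst_congr fun y hy => by
        have hyx : y ≠ x := fun hc => by subst hc; exact hnot hy
        rw [Function.update_of_ne hyx, Function.update_of_ne hyx]
    rw [this]
    exact Relation.ReflTransGen.refl
  · have heq : t.count x = 1 := le_antisymm h1 hge
    have := step_subst_single (X := X) heq (θ := Function.update θ x b)
      (a := c) (by simpa using h)
    rw [Function.update_idem] at this
    exact Relation.ReflTransGen.single this

lemma symsIn_arg {A : Set γ} {f : γ} {ts : Fin (arγ f) → Tm γ arγ}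
    (h : SymsIn A (Tm.app f ts)) (i : Fin (arγ f)) : SymsIn A (ts i) := h.2 i

/-- Forward matching: a step out of an instance of a linear term `l₀` whose
symbols avoid the root symbols of the left-hand sides of `X` must happen
inside the substitution. -/
lemma fmatch {A : Set γ} {X : Set (Tm γ arγ × Tm γ arγ)}
    (hX : ∀ p ∈ X, ∃ g ts, p.1 = Tm.app g ts ∧ g ∉ A)
    {l₀ : Tm γ arγ} (hlin : l₀.Linear) (hA : SymsIn A l₀)
    {θ : ℕ → Tm γ arγ} {w : Tm γ arγ} (h : Step X (l₀.subst θ) w) :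
    ∃ x ∈ l₀.vars, ∃ a, Step X (θ x) a ∧ w = l₀.subst (Function.update θ x a) := by
  induction l₀ generalizing w with
  | var n =>
    refine ⟨n, rfl, w, by simpa [Tm.subst] using h, ?_⟩
    simp [Tm.subst]
  | app f ls ih =>
    simp only [Tm.subst] at h
    generalize hv : Tm.app f (fun i => (ls i).subst θ) = v at h
    cases h with
    | @rule l r θ' hmem =>
      obtain ⟨g, ts', hl, hg⟩ := hX _ hmem
      have hl' : l = Tm.app g ts' := hl
      rw [hl'] at hv
      simp only [Tm.subst] at hv
      injection hv with hf hts
      exact absurd (hf ▸ hA.1) hg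
    | congr i hst =>
      cases hv
      obtain ⟨x, hx, a, ha, ht'⟩ := ih i (linear_arg hlin i) (hA.2 i) hst
      refine ⟨x, Set.mem_iUnion.mpr ⟨i, hx⟩, a, ha, ?_⟩
      simp only [Tm.subst]
      congr 1
      funext j
      by_cases hji : j = i
      · subst hji; simp [ht']
      · rw [Function.update_of_ne hji]
        exact subst_congr fun y hy => by
          have hyx : y ≠ x := fun hc => by
            subst hc
            exact linear_sep hlin hx hji hy
          rw [Function.update_of_ne hyx]

/-- Backward matching: a step into an instance of a linear term `l₀` whose
symbols avoid the root symbols of the right-hand sides of `X` must happen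
inside the substitution. -/
lemma bmatch {A : Set γ} {X : Set (Tm γ arγ × Tm γ arγ)}
    (hX : ∀ p ∈ X, ∃ g ts, p.2 = Tm.app g ts ∧ g ∉ A)
    {l₀ : Tm γ arγ} (hlin : l₀.Linear) (hA : SymsIn A l₀)
    {θ : ℕ → Tm γ arγ} {s : Tm γ arγ} (h : Step X s (l₀.subst θ)) :
    ∃ x ∈ l₀.vars, ∃ a, Step X a (θ x) ∧ s = l₀.subst (Function.update θ x a) := by
  induction l₀ generalizing s with
  | var n =>
    refine ⟨n, rfl, s, by simpa [Tm.subst] using h, ?_⟩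
    simp [Tm.subst]
  | app f ls ih =>
    simp only [Tm.subst] at h
    generalize hv : Tm.app f (fun i => (ls i).subst θ) = v at h
    cases h with
    | @rule l r θ' hmem =>
      obtain ⟨g, ts', hr, hg⟩ := hX _ hmem
      have hr' : r = Tm.app g ts' := hr
      rw [hr'] at hv
      simp only [Tm.subst] at hv
      injection hv with hf hts
      exact absurd (hf ▸ hA.1) hg
    | @congr f' ts t' i hst =>
      injection hv with hf hts
      subst hf
      have hts' : (fun j => (ls j).subst θ) = Function.update ts i t' := eq_of_heq hts
      have ht' : t' = (ls i).subst θ := by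
        have := congrFun hts' i
        simpa using this.symm
      rw [ht'] at hst
      obtain ⟨x, hx, a, ha, hsi⟩ := ih i (linear_arg hlin i) (hA.2 i) hst
      refine ⟨x, Set.mem_iUnion.mpr ⟨i, hx⟩, a, ha, ?_⟩
      simp only [Tm.subst]
      congr 1
      funext j
      by_cases hji : j = i
      · subst hji; exact hsi
      · have h1 : ts j = (ls j).subst θ := by
          have := congrFun hts' j
          rw [Function.update_of_ne hji] at this
          exact this.symm
        rw [h1]
        exact (subst_congr fun y hy => by
          have hyx : y ≠ x := fun hc => by
            subst hc
            exact linear_sep hlin hx hji hy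
          rw [Function.update_of_ne hyx]).symm

/-- A well-behaved TRS over the symbol set `A`: both sides of every rule are
non-variables rooted in `A`, linear, with symbols in `A`, and the variables of
the right-hand side occur in the left-hand side. -/
def GoodTRS (A : Set γ) (X : Set (Tm γ arγ × Tm γ arγ)) : Prop :=
  ∀ p ∈ X, (∃ g ts, p.1 = Tm.app g ts ∧ g ∈ A) ∧ (∃ g ts, p.2 = Tm.app g ts ∧ g ∈ A) ∧
    p.1.Linear ∧ p.2.Linear ∧ p.2.vars ⊆ p.1.vars ∧ SymsIn A p.1 ∧ SymsIn A p.2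

lemma steps_congr {X : Set (Tm γ arγ × Tm γ arγ)} {f : γ} {ts : Fin (arγ f) → Tm γ arγ}
    (i : Fin (arγ f)) {a b : Tm γ arγ} (h : Steps X a b) :
    Steps X (Tm.app f (Function.update ts i a)) (Tm.app f (Function.update ts i b)) := by
  induction h with
  | refl => exact Relation.ReflTransGen.refl
  | tail _ hstep ih =>
    refine ih.tail ?_
    have := Step.congr (R := X) (f := f) (ts := Function.update ts i _) i
      (by simpa using hstep)
    simpa [Function.update_idem] using this

/-- The key commutation (swap) lemma. -/
lemma swap_lemma {A B : Set γ} (hAB : ∀ g, g ∈ A → g ∈ B → False)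
    {R' S' : Set (Tm γ arγ × Tm γ arγ)} (hR : GoodTRS A R') (hS : GoodTRS B S')
    {u v w : Tm γ arγ} (hsv : Step S' u v) (hrw : Step R' v w) :
    ∃ v', Step R' u v' ∧ Steps S' v' w := by
  induction hsv generalizing w with
  | @rule lS rS θ hmem =>
    obtain ⟨-, hrSapp, hlSlin, hrSlin, hvars, hlSsym, hrSsym⟩ := hS _ hmem
    obtain ⟨x, hx, a, ha, hw⟩ := fmatch
      (fun p hp => by
        obtain ⟨⟨g, ts, hl, hg⟩, _⟩ := hR p hp
        exact ⟨g, ts, hl, fun hgB => hAB g hg hgB⟩)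
      hrSlin hrSsym hrw
    have hxl : x ∈ lS.vars := hvars hx
    have hcount : lS.count x = 1 := le_antisymm (hlSlin x) (one_le_count_of_mem hxl)
    refine ⟨lS.subst (Function.update θ x a), step_subst_single hcount ha, ?_⟩
    rw [hw]
    exact Relation.ReflTransGen.single (Step.rule _ hmem)
  | @congr f ts t' i hst ih =>
    generalize hveq : Tm.app f (Function.update ts i t') = v at hrw
    cases hrw with
    | @rule lR rR θ hmem =>
      obtain ⟨⟨g, ls0, hlR, hgA⟩, -, hlRlin, hrRlin, hvars, hlRsym, hrRsym⟩ := hR _ hmem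
      have hlR' : lR = Tm.app g ls0 := hlR
      subst hlR'
      simp only [Tm.subst] at hveq
      -- hveq : Tm.app g (fun j => (ls0 j).subst θ) = Tm.app f (update ts i t')
      injection hveq with hf hts
      subst hf
      have hts' : (fun j => (ls0 j).subst θ) = Function.update ts i t' := (eq_of_heq hts).symm
      have ht' : t' = (ls0 i).subst θ := by
        have := congrFun hts' i
        simpa using this.symm
      rw [ht'] at hst
      obtain ⟨x, hx, a, ha, hsi⟩ := bmatch
        (fun p hp => by
          obtain ⟨-, ⟨g', ts'', hr, hg'⟩, _⟩ := hS p hp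
          exact ⟨g', ts'', hr, fun hg'A => hAB g' hg'A hg'⟩)
        (linear_arg hlRlin i) (hlRsym.2 i) hst
      have hu : Tm.app f ts = (Tm.app f ls0).subst (Function.update θ x a) := by
        simp only [Tm.subst]
        congr 1
        funext j
        by_cases hji : j = i
        · subst hji; exact hsi
        · have h1 : ts j = (ls0 j).subst θ := by
            have := congrFun hts' j
            rw [Function.update_of_ne hji] at this
            exact this.symm
          rw [h1]
          exact (subst_congr fun y hy => by
            have hyx : y ≠ x := fun hc => by
              subst hc
              exact linear_sep hlRlin hx hji hy
            rw [Function.update_of_ne hyx]).symm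
      refine ⟨rR.subst (Function.update θ x a), ?_, ?_⟩
      · rw [hu]; exact Step.rule _ hmem
      · have hle : rR.count x ≤ 1 := hrRlin x
        have hsteps := steps_subst_le1 (X := S') (t := rR) (θ := θ) (x := x) hle ha
        rwa [Function.update_eq_self x θ] at hsteps
    | @congr f' ts2 t2 j hstR =>
      injection hveq with hf hts
      subst hf
      have hts' : Function.update ts i t' = ts2 := eq_of_heq hts
      subst hts'
      by_cases hji : j = i
      · subst hji
        rw [Function.update_self] at hstR
        obtain ⟨m, hm1, hm2⟩ := ih hstR
        refine ⟨Tm.app f (Function.update ts j m), Step.congr j hm1, ?_⟩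
        have := steps_congr (X := S') (f := f) (ts := ts) j hm2
        simpa [Function.update_idem] using this
      · rw [Function.update_of_ne hji] at hstR
        refine ⟨Tm.app f (Function.update ts j t2), Step.congr j hstR, ?_⟩
        refine Relation.ReflTransGen.single ?_
        have := Step.congr (R := S') (f := f) (ts := Function.update ts j t2) i
          (by rw [Function.update_of_ne (Ne.symm hji)]; exact hst)
        rw [Function.update_comm hji] at this
        exact this

lemma push_one {A B : Set γ} (hAB : ∀ g, g ∈ A → g ∈ B → False)
    {R' S' : Set (Tm γ arγ × Tm γ arγ)} (hR : GoodTRS A R') (hS : GoodTRS B S')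
    {u v w : Tm γ arγ} (hsv : Steps S' u v) (hrw : Step R' v w) :
    ∃ v', Step R' u v' ∧ Steps S' v' w := by
  induction hsv using Relation.ReflTransGen.head_induction_on with
  | refl => exact ⟨w, hrw, Relation.ReflTransGen.refl⟩
  | head hstep _ ih =>
    obtain ⟨m, hm1, hm2⟩ := ih
    obtain ⟨p, hp1, hp2⟩ := swap_lemma hAB hR hS hstep hm1
    exact ⟨p, hp1, hp2.trans hm2⟩

lemma push_many {A B : Set γ} (hAB : ∀ g, g ∈ A → g ∈ B → False)
    {R' S' : Set (Tm γ arγ × Tm γ arγ)} (hR : GoodTRS A R') (hS : GoodTRS B S')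
    {v w : Tm γ arγ} (hrw : Steps R' v w) :
    ∀ u, Steps S' u v → ∃ v', Steps R' u v' ∧ Steps S' v' w := by
  induction hrw using Relation.ReflTransGen.head_induction_on with
  | refl => exact fun u hu => ⟨u, Relation.ReflTransGen.refl, hu⟩
  | head hstep _ ih =>
    intro u hu
    obtain ⟨m, hm1, hm2⟩ := push_one hAB hR hS hu hstep
    obtain ⟨p, hp1, hp2⟩ := ih m hm2
    exact ⟨p, Relation.ReflTransGen.head hm1 hp1, hp2⟩

lemma step_union {X Y : Set (Tm γ arγ × Tm γ arγ)} {a b : Tm γ arγ}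
    (h : Step (X ∪ Y) a b) : Step X a b ∨ Step Y a b := by
  induction h with
  | rule θ hmem =>
    rcases hmem with hmem | hmem
    · exact Or.inl (Step.rule θ hmem)
    · exact Or.inr (Step.rule θ hmem)
  | congr i _ ih =>
    rcases ih with ih | ih
    · exact Or.inl (Step.congr i ih)
    · exact Or.inr (Step.congr i ih)

lemma step_mono {X Y : Set (Tm γ arγ × Tm γ arγ)} (hXY : X ⊆ Y) {a b : Tm γ arγ}
    (h : Step X a b) : Step Y a b := by
  induction h with
  | rule θ hmem => exact Step.rule θ (hXY hmem)
  | congr i _ ih => exact Step.congr i ih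

lemma main_decomp {A B : Set γ} (hAB : ∀ g, g ∈ A → g ∈ B → False)
    {R' S' : Set (Tm γ arγ × Tm γ arγ)} (hR : GoodTRS A R') (hS : GoodTRS B S')
    {u w : Tm γ arγ} (h : Steps (R' ∪ S') u w) :
    ∃ v, Steps R' u v ∧ Steps S' v w := by
  induction h with
  | refl => exact ⟨u, Relation.ReflTransGen.refl, Relation.ReflTransGen.refl⟩
  | tail _ hstep ih =>
    obtain ⟨v, hv1, hv2⟩ := ih
    rcases step_union hstep with hstep | hstep
    · obtain ⟨m, hm1, hm2⟩ := push_one hAB hR hS hv2 hstep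
      exact ⟨m, hv1.tail hm1, hm2⟩
    · exact ⟨v, hv1, hv2.tail hstep⟩

end Aux

/-! ### Transport along alphabet renamings -/

section MapLemmas

variable {σ γ : Type} {ar : σ → ℕ} {arγ : γ → ℕ}
variable {ι : σ → γ} {har : ∀ s, arγ (ι s) = ar s}

lemma map_count (t : Tm σ ar) (n : ℕ) : (t.map ι har).count n = t.count n := by
  induction t with
  | var m => rfl
  | app f ts ih =>
    simp only [Tm.map, Tm.count]
    exact Fintype.sum_bijective (finCongr (har f)) (finCongr (har f)).bijective _ _
      (fun i => ih (Fin.cast (har f) i))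

lemma map_linear {t : Tm σ ar} (h : t.Linear) : (t.map ι har).Linear := by
  intro n
  rw [map_count]
  exact h n

lemma map_vars (t : Tm σ ar) : (t.map ι har).vars = t.vars := by
  induction t with
  | var m => rfl
  | app f ts ih =>
    simp only [Tm.map, Tm.vars]
    ext x
    simp only [Set.mem_iUnion]
    constructor
    · rintro ⟨i, hi⟩
      rw [ih] at hi
      exact ⟨_, hi⟩
    · rintro ⟨j, hj⟩
      refine ⟨Fin.cast (har f).symm j, ?_⟩
      rw [ih]
      simpa using hj

lemma map_symsIn (t : Tm σ ar) : SymsIn (Set.range ι) (t.map ι har) := by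
  induction t with
  | var m => trivial
  | app f ts ih => exact ⟨⟨f, rfl⟩, fun i => ih _⟩

lemma map_goodTRS {X : Set (Tm σ ar × Tm σ ar)} (hTRS : IsTRS X)
    (hlin : LinearTRS X) (hcf : CollapseFree X) :
    GoodTRS (Set.range ι) (mapRules ι har X) := by
  rintro p ⟨lr, hlr, rfl⟩
  obtain ⟨hl, hr⟩ := hlin lr hlr
  obtain ⟨hncl, hncr⟩ := hcf lr hlr
  refine ⟨?_, ?_, map_linear hl, map_linear hr, ?_, map_symsIn _, map_symsIn _⟩
  · cases hlr1 : lr.1 with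
    | var n => exact absurd ⟨n, hlr1⟩ hncl
    | app f ts =>
      refine ⟨ι f, fun i => (ts (Fin.cast (har f) i)).map ι har, ?_, ⟨f, rfl⟩⟩
      show Tm.map ι har lr.1 = _
      rw [hlr1]
      rfl
  · cases hlr2 : lr.2 with
    | var n => exact absurd ⟨n, hlr2⟩ hncr
    | app f ts =>
      refine ⟨ι f, fun i => (ts (Fin.cast (har f) i)).map ι har, ?_, ⟨f, rfl⟩⟩
      show Tm.map ι har lr.2 = _
      rw [hlr2]
      rfl
  · show (Tm.map ι har lr.2).vars ⊆ (Tm.map ι har lr.1).vars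
    rw [map_vars, map_vars]
    exact hTRS.2 lr hlr

end MapLemmas

/-! ### Statement 16 -/

theorem stmt_16 {σ δ γ : Type} {ar : σ → ℕ} {arδ : δ → ℕ} {arγ : γ → ℕ}
    [Finite σ] [Finite δ] [Finite γ]
    (R : Set (Tm σ ar × Tm σ ar)) (S : Set (Tm δ arδ × Tm δ arδ))
    (hR : IsTRS R) (hS : IsTRS S)
    (hRlin : LinearTRS R) (hSlin : LinearTRS S)
    (hRcf : CollapseFree R) (hScf : CollapseFree S)
    -- `Γ` is a ranked alphabet containing the disjoint alphabets `Σ` and `Δ`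
    (ι₁ : σ → γ) (ι₂ : δ → γ)
    (hinj₁ : Function.Injective ι₁) (hinj₂ : Function.Injective ι₂)
    (har₁ : ∀ s, arγ (ι₁ s) = ar s) (har₂ : ∀ s, arγ (ι₂ s) = arδ s)
    (hdisj : ∀ s t, ι₁ s ≠ ι₂ t)
    (u w : Tm γ arγ) :
    -- `u →*_{R∪S} w` iff `u →*_R v →*_S w` for some `v`
    Steps (mapRules ι₁ har₁ R ∪ mapRules ι₂ har₂ S) u w ↔
      ∃ v : Tm γ arγ,
        Steps (mapRules ι₁ har₁ R) u v ∧ Steps (mapRules ι₂ har₂ S) v w := by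
  have hGoodR : GoodTRS (Set.range ι₁) (mapRules ι₁ har₁ R) := map_goodTRS hR hRlin hRcf
  have hGoodS : GoodTRS (Set.range ι₂) (mapRules ι₂ har₂ S) := map_goodTRS hS hSlin hScf
  have hAB : ∀ g, g ∈ Set.range ι₁ → g ∈ Set.range ι₂ → False := by
    rintro g ⟨s, rfl⟩ ⟨t, ht⟩
    exact hdisj s t ht.symm
  constructor
  · exact main_decomp hAB hGoodR hGoodS
  · rintro ⟨v, h1, h2⟩
    exact Relation.ReflTransGen.trans (Relation.ReflTransGen.mono
        (fun a b => step_mono Set.subset_union_left) _ _ h1)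
      (Relation.ReflTransGen.mono
        (fun a b => step_mono Set.subset_union_right) _ _ h2)
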